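/- arXiv:1601.03759 — 4 statements merged into one kernel-verified Lean document; each statement's English description precedes it below -/
import Mathlib

section
/- Let X : [0,∞) → ℝ be a continuous function and let r⁻¹ : [0,∞) → [0,∞) be nondecreasing and continuous with r⁻¹(t) = t − α·L(t) where L is a continuous nondecreasing function that increases only on the set {s : X(s) = 0} (meaning L(b) = L(a) whenever X(s) ≠ 0 for all s ∈ [a,b]). If ∫₀ᵗ 1_{X(s)=0} d r⁻¹(s) = 0 (Lebesgue–Stieltjes integral) for all t, then ∫₀ᵗ 1_{X(s)=0} ds = α·L(t) for all t ≥ 0. -/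
open MeasureTheory

/-- Let `X` be continuous, `L` continuous nondecreasing with `L 0 = 0` that
increases only on `{s | X s = 0}`, `α > 0`, and let `F` be the Stieltjes function
`F t = t - α * L t` (assumed nondecreasing). If the Lebesgue–Stieltjes integral
`∫₀ᵗ 1_{X=0} dF = 0` for all `t ≥ 0`, then `∫₀ᵗ 1_{X=0}(s) ds = α * L t` for all `t ≥ 0`. -/
theorem stmt2 (α : ℝ) (hα : 0 < α) (X L : ℝ → ℝ)
    (hX : Continuous X) (hLc : Continuous L) (hLm : Monotone L) (hL0 : L 0 = 0)
    (hLflat : ∀ a b : ℝ, a ≤ b → (∀ s ∈ Set.Icc a b, X s ≠ 0) → L b = L a)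
    (F : StieltjesFunction ℝ) (hF : ∀ t, F t = t - α * L t)
    (hzero : ∀ t ∈ Set.Ici (0:ℝ),
      ∫ s in Set.Ioc (0:ℝ) t, Set.indicator {u | X u = 0} (fun _ => (1:ℝ)) s ∂F.measure = 0) :
    ∀ t ∈ Set.Ici (0:ℝ),
      ∫ s in Set.Ioc (0:ℝ) t, Set.indicator {u | X u = 0} (fun _ => (1:ℝ)) s = α * L t := by
  -- Stieltjes function for α·L
  set G : StieltjesFunction ℝ :=
    { toFun := fun t => α * L t
      mono' := fun a b h => mul_le_mul_of_nonneg_left (hLm h) hα.le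
      right_continuous' := fun x => (continuous_const.mul hLc).continuousWithinAt } with hGdef
  have hGval : ∀ t, G t = α * L t := fun t => rfl
  have hSmeas : MeasurableSet {u | X u = 0} :=
    (isClosed_singleton.preimage hX).measurableSet
  -- the measure dG is carried by {X = 0}
  have hGnull : G.measure {u | X u = 0}ᶜ = 0 := by
    apply measure_null_of_locally_null
    intro x hx
    have hopen : IsOpen ({u | X u = 0}ᶜ) := (isClosed_singleton.preimage hX).isOpen_compl
    rcases Metric.isOpen_iff.1 hopen x hx with ⟨ε, hε, hball⟩
    have hsub : Set.Icc (x - ε/2) (x + ε/2) ⊆ {u | X u = 0}ᶜ := by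
      intro y hy
      apply hball
      rw [Metric.mem_ball, Real.dist_eq, abs_sub_lt_iff]
      constructor <;> [linarith [hy.2]; linarith [hy.1]]
    have hLeq : L (x + ε/2) = L (x - ε/2) :=
      hLflat _ _ (by linarith) (fun s hs => hsub hs)
    refine ⟨Set.Ioo (x - ε/2) (x + ε/2), ?_, ?_⟩
    · exact mem_nhdsWithin_of_mem_nhds
        (Ioo_mem_nhds (by linarith) (by linarith))
    · refine le_antisymm ?_ (zero_le)
      calc G.measure (Set.Ioo (x - ε/2) (x + ε/2))
          ≤ G.measure (Set.Ioc (x - ε/2) (x + ε/2)) :=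
            measure_mono Set.Ioo_subset_Ioc_self
        _ = ENNReal.ofReal (G (x + ε/2) - G (x - ε/2)) := G.measure_Ioc _ _
        _ = 0 := by rw [hGval, hGval, hLeq]; simp
  -- F.measure + G.measure = volume
  haveI : IsLocallyFiniteMeasure (F.measure + G.measure) := by
    constructor
    intro x
    refine ⟨Set.Ioo (x-1) (x+1), Ioo_mem_nhds (by linarith) (by linarith), ?_⟩
    rw [Measure.add_apply]
    exact ENNReal.add_lt_top.2 ⟨lt_of_le_of_lt (measure_mono Set.Ioo_subset_Ioc_self)
        (by rw [F.measure_Ioc]; exact ENNReal.ofReal_lt_top),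
      lt_of_le_of_lt (measure_mono Set.Ioo_subset_Ioc_self)
        (by rw [G.measure_Ioc]; exact ENNReal.ofReal_lt_top)⟩
  have hsum : F.measure + G.measure = volume := by
    refine Measure.ext_of_Ioc _ _ (fun a b hab => ?_)
    have h1 : (0:ℝ) ≤ F b - F a := sub_nonneg.2 (F.mono hab.le)
    have h2 : (0:ℝ) ≤ G b - G a := sub_nonneg.2 (G.mono hab.le)
    rw [Measure.add_apply, F.measure_Ioc, G.measure_Ioc, Real.volume_Ioc,
      ← ENNReal.ofReal_add h1 h2]
    congr 1
    rw [hF, hF, hGval, hGval]; ring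
  intro t ht
  set S : Set ℝ := {u | X u = 0} ∩ Set.Ioc 0 t with hSdef
  have hSm : MeasurableSet S := hSmeas.inter measurableSet_Ioc
  -- From hzero: F.measure S = 0
  have hFS : F.measure S = 0 := by
    have h := hzero t ht
    rw [integral_indicator hSmeas, Measure.restrict_restrict hSmeas,
      setIntegral_const] at h
    have hfin : F.measure S ≠ ⊤ := by
      refine ne_top_of_le_ne_top ?_ (measure_mono Set.inter_subset_right)
      rw [F.measure_Ioc]; exact ENNReal.ofReal_ne_top
    simp only [smul_eq_mul, mul_one] at h
    rcases ENNReal.toReal_eq_zero_iff _ |>.1 h with h0 | h0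
    · exact h0
    · exact absurd h0 hfin
  -- G.measure S = ofReal (α * L t)
  have hGS : G.measure S = ENNReal.ofReal (α * L t) := by
    have hle : G.measure (Set.Ioc 0 t) ≤ G.measure S := by
      calc G.measure (Set.Ioc 0 t)
          ≤ G.measure (Set.Ioc 0 t ∩ {u | X u = 0}) +
              G.measure (Set.Ioc 0 t \ {u | X u = 0}) := measure_le_inter_add_diff _ _ _
        _ = G.measure S := by
            rw [Set.inter_comm]
            have : G.measure (Set.Ioc 0 t \ {u | X u = 0}) = 0 :=
              measure_mono_null (fun y hy => hy.2) hGnull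
            rw [this, add_zero]
    have := le_antisymm (measure_mono Set.inter_subset_right) hle
    rw [this, G.measure_Ioc, hGval, hGval, hL0, mul_zero, sub_zero]
  -- conclude
  have hvol : volume S = ENNReal.ofReal (α * L t) := by
    rw [← hsum, Measure.add_apply, hFS, zero_add, hGS]
  rw [integral_indicator hSmeas, Measure.restrict_restrict hSmeas, setIntegral_const,
    smul_eq_mul, mul_one, measureReal_def, hvol, ENNReal.toReal_ofReal]
  exact mul_nonneg hα.le (hL0 ▸ hLm ht)
end

section
/- For every t > 0 and α > 0, the function y ↦ (1/(α·√(2πy)))·exp(−(t−y)²/(2α²y)) on (0,∞) equals the derivative in y of the function y ↦ −Φ((t−y)/(α√y)) + exp(2t/α²)·Φ((t+y)/(α√y)), where Φ is the standard normal cumulative distribution function Φ(x) = (1/√(2π))·∫_{−∞}^{x} exp(−z²/2) dz. -/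
open Real MeasureTheory

/-- The standard normal cumulative distribution function. -/
noncomputable def gaussCDF (x : ℝ) : ℝ :=
  (Real.sqrt (2 * Real.pi))⁻¹ * ∫ z in Set.Iic x, Real.exp (-z ^ 2 / 2)

lemma integrable_gauss_kernel : MeasureTheory.Integrable (fun z : ℝ => Real.exp (-z ^ 2 / 2)) := by
  have := integrable_exp_neg_mul_sq (by norm_num : (0:ℝ) < 1/2)
  convert this using 2 with x
  ring

lemma hasDerivAt_gaussCDF (x : ℝ) :
    HasDerivAt gaussCDF ((Real.sqrt (2 * Real.pi))⁻¹ * Real.exp (-x ^ 2 / 2)) x := by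
  have hi := integrable_gauss_kernel
  have hfun : gaussCDF = fun x =>
      (Real.sqrt (2 * Real.pi))⁻¹ *
        ((∫ z in Set.Iic (0:ℝ), Real.exp (-z ^ 2 / 2)) + ∫ z in (0:ℝ)..x, Real.exp (-z ^ 2 / 2)) := by
    funext u
    rw [gaussCDF]
    congr 1
    have := intervalIntegral.integral_Iic_sub_Iic (μ := volume)
      (f := fun z : ℝ => Real.exp (-z ^ 2 / 2)) hi.integrableOn hi.integrableOn (a := 0) (b := u)
    linarith [this]
  rw [hfun]
  have hcont : Continuous fun z : ℝ => Real.exp (-z ^ 2 / 2) := by continuity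
  have hd : HasDerivAt (fun u : ℝ => ∫ z in (0:ℝ)..u, Real.exp (-z ^ 2 / 2))
      (Real.exp (-x ^ 2 / 2)) x :=
    intervalIntegral.integral_hasDerivAt_right hi.intervalIntegrable
      hcont.aestronglyMeasurable.stronglyMeasurableAtFilter hcont.continuousAt
  exact ((hd.const_add _).const_mul _)

/-- For `t > 0`, `α > 0` and `y > 0`, the function
`y ↦ -Φ((t-y)/(α√y)) + exp(2t/α²) Φ((t+y)/(α√y))` has derivative
`(1/(α √(2πy))) exp(-(t-y)²/(2α²y))` at `y`. -/
theorem stmt4 (t α : ℝ) (ht : 0 < t) (hα : 0 < α) (y : ℝ) (hy : 0 < y) :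
    HasDerivAt
      (fun y : ℝ =>
        -gaussCDF ((t - y) / (α * Real.sqrt y))
          + Real.exp (2 * t / α ^ 2) * gaussCDF ((t + y) / (α * Real.sqrt y)))
      (1 / (α * Real.sqrt (2 * Real.pi * y)) * Real.exp (-(t - y) ^ 2 / (2 * α ^ 2 * y)))
      y := by
  set s := Real.sqrt y with hs_def
  have hs0 : 0 < s := Real.sqrt_pos.mpr hy
  have hs2 : s ^ 2 = y := Real.sq_sqrt hy.le
  have hαs : α * s ≠ 0 := by positivity
  have hsq : HasDerivAt Real.sqrt (1 / (2 * s)) y := Real.hasDerivAt_sqrt hy.ne'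
  have hden : HasDerivAt (fun y : ℝ => α * Real.sqrt y) (α * (1 / (2 * s))) y := hsq.const_mul α
  have hu : HasDerivAt (fun y : ℝ => (t - y) / (α * Real.sqrt y))
      (((-1) * (α * s) - (t - y) * (α * (1 / (2 * s)))) / (α * s) ^ 2) y :=
    ((hasDerivAt_id y).const_sub t).div hden hαs
  have hv : HasDerivAt (fun y : ℝ => (t + y) / (α * Real.sqrt y))
      ((1 * (α * s) - (t + y) * (α * (1 / (2 * s)))) / (α * s) ^ 2) y :=
    ((hasDerivAt_id y).const_add t).div hden hαs
  have h1 := ((hasDerivAt_gaussCDF ((t - y) / (α * s))).comp y hu).neg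
  have h2 := ((hasDerivAt_gaussCDF ((t + y) / (α * s))).comp y hv).const_mul
      (Real.exp (2 * t / α ^ 2))
  have hsum := h1.add h2
  refine hsum.congr_deriv ?_
  symm
  have hc : Real.sqrt (2 * Real.pi) ≠ 0 := by positivity
  have hexp1 : ((t - y) / (α * s)) ^ 2 = (t - y) ^ 2 / (α ^ 2 * y) := by
    rw [div_pow, mul_pow, hs2]
  have hexp2 : ((t + y) / (α * s)) ^ 2 = (t + y) ^ 2 / (α ^ 2 * y) := by
    rw [div_pow, mul_pow, hs2]
  have key : Real.exp (2 * t / α ^ 2) * Real.exp (-((t + y) / (α * s)) ^ 2 / 2)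
      = Real.exp (-(t - y) ^ 2 / (2 * α ^ 2 * y)) := by
    rw [← Real.exp_add, hexp2]
    congr 1
    field_simp
    ring
  have key1 : Real.exp (-((t - y) / (α * s)) ^ 2 / 2)
      = Real.exp (-(t - y) ^ 2 / (2 * α ^ 2 * y)) := by
    rw [hexp1]
    congr 1
    ring
  have hsqrt : Real.sqrt (2 * Real.pi * y) = Real.sqrt (2 * Real.pi) * s := by
    rw [hs_def, Real.sqrt_mul (by positivity)]
  rw [hsqrt, key1]
  have key' : Real.exp (2 * t / α ^ 2) *
        ((Real.sqrt (2 * Real.pi))⁻¹ * Real.exp (-((t + y) / (α * s)) ^ 2 / 2) *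
          ((1 * (α * s) - (t + y) * (α * (1 / (2 * s)))) / (α * s) ^ 2))
      = (Real.sqrt (2 * Real.pi))⁻¹ * Real.exp (-(t - y) ^ 2 / (2 * α ^ 2 * y)) *
          ((1 * (α * s) - (t + y) * (α * (1 / (2 * s)))) / (α * s) ^ 2) := by
    rw [← key]; ring
  rw [key']
  set E := Real.exp (-(t - y) ^ 2 / (2 * α ^ 2 * y)) with hE
  rw [← hs2]
  field_simp
  ring
end

section
/- Fix α > 0. Define E(t) = √(2/π) · ∫₀ᵗ (1/√y) · ∫_{(t−y)/α}^∞ exp(−z²/(2y)) dz dy for t > 0. Then E is differentiable on (0,∞) and E′(t) = 2·exp(2t/α²)·(1 − Φ(2√t/α)), where Φ is the standard normal CDF. -/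
open MeasureTheory Real Set Filter Topology

noncomputable def gf (z : ℝ) : ℝ := Real.exp (-z ^ 2 / 2)

lemma gf_eq : gf = fun z => Real.exp (-(1/2 : ℝ) * z ^ 2) := by
  funext z; unfold gf; ring_nf

lemma gf_cont : Continuous gf := by unfold gf; fun_prop

lemma gf_integrable : Integrable gf := by
  rw [gf_eq]; exact integrable_exp_neg_mul_sq (by norm_num)

lemma gf_nonneg (z : ℝ) : 0 ≤ gf z := (Real.exp_pos _).le

lemma gf_le_one (z : ℝ) : gf z ≤ 1 := by
  have h : -z ^ 2 / 2 ≤ 0 := by nlinarith [sq_nonneg z]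
  simpa [gf] using Real.exp_le_exp.2 h |>.trans_eq Real.exp_zero

lemma gf_total : ∫ z, gf z = Real.sqrt (2 * π) := by
  rw [gf_eq, integral_gaussian, show π / (1/2 : ℝ) = 2 * π by ring]

noncomputable def Nf (x : ℝ) : ℝ := ∫ z in Iic x, gf z
noncomputable def qf (x : ℝ) : ℝ := ∫ z in Ioi x, gf z

lemma Nf_add_qf (x : ℝ) : Nf x + qf x = Real.sqrt (2 * π) := by
  rw [← gf_total,
    ← intervalIntegral.integral_Iic_add_Ioi (b := x) gf_integrable.integrableOn
      gf_integrable.integrableOn]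
  rfl

lemma qf_eq_Nf_neg (x : ℝ) : qf x = Nf (-x) := by
  have h := integral_comp_neg_Ioi x gf
  unfold qf Nf
  rw [← h]
  simp only [gf, neg_sq]

lemma Nf_nonneg (x : ℝ) : 0 ≤ Nf x :=
  setIntegral_nonneg measurableSet_Iic fun z _ => gf_nonneg z

lemma qf_nonneg (x : ℝ) : 0 ≤ qf x :=
  setIntegral_nonneg measurableSet_Ioi fun z _ => gf_nonneg z

lemma qf_le (x : ℝ) : qf x ≤ Real.sqrt (2 * π) := by
  have := Nf_nonneg x
  linarith [Nf_add_qf x]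

lemma Nf_le (x : ℝ) : Nf x ≤ Real.sqrt (2 * π) := by
  have := qf_nonneg x
  linarith [Nf_add_qf x]

lemma hasDerivAt_Nf (x : ℝ) : HasDerivAt Nf (gf x) x := by
  have key : ∀ u : ℝ, Nf u = Nf 0 + ∫ z in (0:ℝ)..u, gf z := by
    intro u
    have := intervalIntegral.integral_Iic_sub_Iic (a := (0:ℝ)) (b := u)
      gf_integrable.integrableOn gf_integrable.integrableOn
    unfold Nf; linarith [this]
  have h2 : HasDerivAt (fun u => Nf 0 + ∫ z in (0:ℝ)..u, gf z) (gf x) x := by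
    apply HasDerivAt.const_add
    exact intervalIntegral.integral_hasDerivAt_right
      (gf_integrable.intervalIntegrable)
      (gf_cont.stronglyMeasurable.stronglyMeasurableAtFilter)
      gf_cont.continuousAt
  exact h2.congr_of_eventuallyEq (Eventually.of_forall key)

lemma hasDerivAt_qf (x : ℝ) : HasDerivAt qf (-gf x) x := by
  have : qf = fun u => Real.sqrt (2 * π) - Nf u := by
    funext u; linarith [Nf_add_qf u]
  rw [this]
  simpa using (hasDerivAt_Nf x).const_sub (Real.sqrt (2 * π))

lemma Nf_cont : Continuous Nf := continuous_iff_continuousAt.2 fun x =>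
  (hasDerivAt_Nf x).continuousAt

lemma qf_cont : Continuous qf := continuous_iff_continuousAt.2 fun x =>
  (hasDerivAt_qf x).continuousAt

lemma Nf_tendsto_atBot : Tendsto Nf atBot (𝓝 0) := by
  have hb : ∀ x : ℝ, Nf x ≤ Real.exp (1/2) * Real.exp x := by
    intro x
    have h1 : ∀ z ∈ Iic x, gf z ≤ Real.exp (1/2 + z) := by
      intro z _
      unfold gf
      apply Real.exp_le_exp.2
      nlinarith [sq_nonneg (z + 1)]
    calc Nf x ≤ ∫ z in Iic x, Real.exp (1/2 + z) := by
          apply setIntegral_mono_on gf_integrable.integrableOn ?_ measurableSet_Iic h1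
          · simp_rw [Real.exp_add]
            exact (integrableOn_exp_Iic x).const_mul _
      _ = Real.exp (1/2) * Real.exp x := by
          simp_rw [Real.exp_add]
          rw [integral_const_mul, integral_exp_Iic]
  have h0 : Tendsto (fun x : ℝ => Real.exp (1/2) * Real.exp x) atBot (𝓝 0) := by
    simpa using (Real.tendsto_exp_atBot).const_mul (Real.exp (1/2))
  exact squeeze_zero (fun x => Nf_nonneg x) hb h0

lemma qf_lip (x y : ℝ) : |qf x - qf y| ≤ |x - y| := by
  have hd : Differentiable ℝ qf := fun x => (hasDerivAt_qf x).differentiableAt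
  have hl : LipschitzWith 1 qf := by
    apply lipschitzWith_of_nnnorm_deriv_le hd
    intro x
    rw [(hasDerivAt_qf x).deriv]
    simp only [← NNReal.coe_le_coe, coe_nnnorm, NNReal.coe_one, Real.norm_eq_abs, abs_neg,
      abs_of_nonneg (gf_nonneg x)]
    exact gf_le_one x
  have := hl.dist_le_mul x y
  simpa [Real.dist_eq] using this

lemma scaling {y : ℝ} (hy : 0 < y) (c : ℝ) :
    (1 / Real.sqrt y) * ∫ z in Ioi c, Real.exp (-z ^ 2 / (2 * y)) = qf (c / Real.sqrt y) := by
  have hs : 0 < Real.sqrt y := Real.sqrt_pos.2 hy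
  have hsq : Real.sqrt y ^ 2 = y := Real.sq_sqrt hy.le
  have h1 : ∀ z : ℝ, Real.exp (-z ^ 2 / (2 * y)) = gf ((Real.sqrt y)⁻¹ * z) := by
    intro z
    unfold gf
    congr 1
    rw [mul_pow, inv_pow, hsq]
    field_simp
  simp_rw [h1]
  rw [integral_comp_mul_left_Ioi gf c (inv_pos.2 hs)]
  rw [smul_eq_mul, inv_inv]
  have : (Real.sqrt y)⁻¹ * c = c / Real.sqrt y := by ring
  rw [this]
  unfold qf
  field_simp

lemma sqrtinv_integrable (T : ℝ) : IntegrableOn (fun y : ℝ => (Real.sqrt y)⁻¹) (Ioc 0 T) := by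
  have h : IntervalIntegrable (fun y : ℝ => y ^ (-(1/2) : ℝ)) volume 0 T := by
    apply intervalIntegral.intervalIntegrable_rpow'
    norm_num
  rcases le_or_gt 0 T with hT | hT
  · have := (intervalIntegrable_iff_integrableOn_Ioc_of_le hT).1 h
    apply this.congr_fun ?_ measurableSet_Ioc
    intro y hy
    simp only []
    rw [Real.sqrt_eq_rpow, ← Real.rpow_neg hy.1.le]
  · simp [Ioc_eq_empty (by linarith : ¬ (0:ℝ) < T)]

section key
variable {a b : ℝ}

/-- antiderivative -/
noncomputable def Gaux (a b : ℝ) (y : ℝ) : ℝ :=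
  Real.exp (-(a * b)) * Nf (b * Real.sqrt y - a / Real.sqrt y)
    - Real.exp (a * b) * Nf (-(b * Real.sqrt y) - a / Real.sqrt y)

lemma hasDerivAt_Gaux (ha : 0 < a) (hb : 0 < b) {y : ℝ} (hy : 0 < y) :
    HasDerivAt (Gaux a b) (b / Real.sqrt y * Real.exp (-(a ^ 2 / y + b ^ 2 * y) / 2)) y := by
  have hs : 0 < Real.sqrt y := Real.sqrt_pos.2 hy
  have hsq : Real.sqrt y ^ 2 = y := Real.sq_sqrt hy.le
  set s := Real.sqrt y with hs_def
  have hroot : HasDerivAt Real.sqrt (1 / (2 * s)) y := Real.hasDerivAt_sqrt hy.ne'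
  have hinv : HasDerivAt (fun u => (Real.sqrt u)⁻¹) (-(1 / (2 * s)) / s ^ 2) y :=
    hroot.inv hs.ne'
  have hu1 : HasDerivAt (fun u => b * Real.sqrt u - a / Real.sqrt u)
      (b * (1 / (2 * s)) - a * (-(1 / (2 * s)) / s ^ 2)) y := by
    have h1 := hroot.const_mul b
    have h2 := hinv.const_mul a
    simpa [div_eq_mul_inv] using h1.fun_sub h2
  have hu2 : HasDerivAt (fun u => -(b * Real.sqrt u) - a / Real.sqrt u)
      (-(b * (1 / (2 * s))) - a * (-(1 / (2 * s)) / s ^ 2)) y := by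
    have h1 := (hroot.const_mul b).fun_neg
    have h2 := hinv.const_mul a
    simpa [div_eq_mul_inv] using h1.fun_sub h2
  have hN1 := (hasDerivAt_Nf (b * s - a / s)).comp y hu1
  have hN2 := (hasDerivAt_Nf (-(b * s) - a / s)).comp y hu2
  have hG := (hN1.const_mul (Real.exp (-(a * b)))).sub (hN2.const_mul (Real.exp (a * b)))
  refine hG.congr_deriv (Eq.symm ?_)
  have e1 : Real.exp (-(a * b)) * gf (b * s - a / s) = Real.exp (-(a ^ 2 / y + b ^ 2 * y) / 2) := by
    rw [gf, ← Real.exp_add]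
    congr 1
    have : (b * s - a / s) ^ 2 = b ^ 2 * y - 2 * (a * b) + a ^ 2 / y := by
      field_simp
      rw [← hsq]; ring
    rw [this]; ring
  have e2 : Real.exp (a * b) * gf (-(b * s) - a / s) = Real.exp (-(a ^ 2 / y + b ^ 2 * y) / 2) := by
    rw [gf, ← Real.exp_add]
    congr 1
    have : (-(b * s) - a / s) ^ 2 = b ^ 2 * y + 2 * (a * b) + a ^ 2 / y := by
      field_simp
      rw [← hsq]; ring
    rw [this]; ring
  calc b / s * Real.exp (-(a ^ 2 / y + b ^ 2 * y) / 2)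
      = Real.exp (-(a * b)) * gf (b * s - a / s) * (b * (1 / (2 * s)) - a * (-(1 / (2 * s)) / s ^ 2))
        - Real.exp (a * b) * gf (-(b * s) - a / s) * (-(b * (1 / (2 * s))) - a * (-(1 / (2 * s)) / s ^ 2)) := by
        rw [e1, e2]
        field_simp
        ring
    _ = _ := by ring

lemma Gaux_tendsto_zero (ha : 0 < a) (hb : 0 < b) :
    Tendsto (Gaux a b) (𝓝[>] 0) (𝓝 0) := by
  have hsqrt : Tendsto Real.sqrt (𝓝[>] (0:ℝ)) (𝓝[>] 0) := by
    apply tendsto_nhdsWithin_of_tendsto_nhds_of_eventually_within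
    · have : Tendsto Real.sqrt (𝓝 0) (𝓝 0) := by
        simpa using Real.continuous_sqrt.tendsto 0
      exact this.mono_left nhdsWithin_le_nhds
    · filter_upwards [self_mem_nhdsWithin] with y hy
      exact Real.sqrt_pos.2 hy
  have hneg : Tendsto (fun s : ℝ => -(a / s)) (𝓝[>] (0:ℝ)) atBot := by
    have h1 : Tendsto (fun s : ℝ => a / s) (𝓝[>] (0:ℝ)) atTop := by
      simp_rw [div_eq_mul_inv]
      exact tendsto_inv_nhdsGT_zero.const_mul_atTop ha
    exact tendsto_neg_atBot_iff.2 h1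
  have hbd : ∀ᶠ s in (𝓝[>] (0:ℝ)), b * s ≤ b := by
    have h1 : ∀ᶠ s in 𝓝 (0:ℝ), s < 1 := eventually_lt_nhds zero_lt_one
    filter_upwards [h1.filter_mono nhdsWithin_le_nhds, self_mem_nhdsWithin] with s hs1 hs0
    have : (0:ℝ) < s := hs0
    nlinarith
  have hdiv1 : Tendsto (fun s : ℝ => b * s - a / s) (𝓝[>] (0:ℝ)) atBot := by
    simp_rw [sub_eq_add_neg]
    exact tendsto_atBot_add_left_of_ge' _ b hbd hneg
  have hdiv2 : Tendsto (fun s : ℝ => -(b * s) - a / s) (𝓝[>] (0:ℝ)) atBot := by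
    simp_rw [sub_eq_add_neg]
    apply tendsto_atBot_add_left_of_ge' _ 0 ?_ hneg
    filter_upwards [self_mem_nhdsWithin] with s hs
    have : (0:ℝ) < s := hs
    nlinarith [hb]
  have h1 : Tendsto (fun y => Nf (b * Real.sqrt y - a / Real.sqrt y)) (𝓝[>] (0:ℝ)) (𝓝 0) :=
    Nf_tendsto_atBot.comp (hdiv1.comp hsqrt)
  have h2 : Tendsto (fun y => Nf (-(b * Real.sqrt y) - a / Real.sqrt y)) (𝓝[>] (0:ℝ)) (𝓝 0) :=
    Nf_tendsto_atBot.comp (hdiv2.comp hsqrt)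
  have := (h1.const_mul (Real.exp (-(a * b)))).sub (h2.const_mul (Real.exp (a * b)))
  rw [mul_zero, mul_zero, sub_zero] at this
  exact this

lemma g_contOn (a b : ℝ) :
    ContinuousOn (fun y : ℝ => b / Real.sqrt y * Real.exp (-(a ^ 2 / y + b ^ 2 * y) / 2))
      (Ioi 0) := by
  apply ContinuousOn.mul
  · apply ContinuousOn.div continuousOn_const Real.continuous_sqrt.continuousOn
    intro y hy
    exact (Real.sqrt_pos.2 hy).ne'
  · apply ContinuousOn.rexp
    apply ContinuousOn.div ?_ continuousOn_const (fun y _ => two_ne_zero)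
    apply ContinuousOn.neg
    apply ContinuousOn.add
    · exact continuousOn_const.div continuousOn_id (fun y hy => ne_of_gt hy)
    · exact (continuous_const.mul continuous_id).continuousOn

lemma key_integral (ha : 0 < a) (hb : 0 < b) {T : ℝ} (hT : 0 < T) :
    ∫ y in Ioo 0 T, b / Real.sqrt y * Real.exp (-(a ^ 2 / y + b ^ 2 * y) / 2) = Gaux a b T := by
  set g := fun y : ℝ => b / Real.sqrt y * Real.exp (-(a ^ 2 / y + b ^ 2 * y) / 2) with hg
  have hgcont := g_contOn a b
  have hgint : IntegrableOn g (Ioc 0 T) := by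
    apply Integrable.mono ((sqrtinv_integrable T).const_mul b)
    · exact (hgcont.mono Ioc_subset_Ioi_self).aestronglyMeasurable measurableSet_Ioc
    · rw [ae_restrict_iff' measurableSet_Ioc]
      apply Eventually.of_forall
      intro y hy
      have hy0 : 0 < y := hy.1
      have hs : 0 < Real.sqrt y := Real.sqrt_pos.2 hy0
      have hexp : Real.exp (-(a ^ 2 / y + b ^ 2 * y) / 2) ≤ 1 := by
        rw [← Real.exp_zero]
        apply Real.exp_le_exp.2
        have h1 : 0 ≤ a ^ 2 / y := by positivity
        have h2 : 0 ≤ b ^ 2 * y := by positivity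
        linarith
      have hgy : 0 ≤ g y := by
        apply mul_nonneg (by positivity) (Real.exp_pos _).le
      rw [Real.norm_eq_abs, Real.norm_eq_abs, abs_of_nonneg hgy,
        abs_of_nonneg (by positivity : (0:ℝ) ≤ b * (Real.sqrt y)⁻¹)]
      calc g y ≤ b / Real.sqrt y * 1 := by
            apply mul_le_mul_of_nonneg_left hexp (by positivity)
        _ = b * (Real.sqrt y)⁻¹ := by ring
  have hsub : ∀ ε, ε ∈ Ioo (0:ℝ) T → ∫ y in ε..T, g y = Gaux a b T - Gaux a b ε := by
    intro ε hε
    apply intervalIntegral.integral_eq_sub_of_hasDerivAt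
    · intro y hy
      rw [uIcc_of_le hε.2.le] at hy
      exact hasDerivAt_Gaux ha hb (lt_of_lt_of_le hε.1 hy.1)
    · apply (hgcont.mono ?_).intervalIntegrable
      rw [uIcc_of_le hε.2.le]
      intro y hy
      exact lt_of_lt_of_le hε.1 hy.1
  set e : ℕ → ℝ := fun n => T / (n + 2) with he
  have he_mem : ∀ n, e n ∈ Ioo (0:ℝ) T := by
    intro n
    constructor
    · positivity
    · rw [div_lt_iff₀ (by positivity)]
      nlinarith [hT, Nat.cast_nonneg (α := ℝ) n]
  have hmono : Monotone fun n => Ioc (e n) T := by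
    intro m n hmn
    apply Ioc_subset_Ioc_left
    apply div_le_div_of_nonneg_left hT.le (by positivity)
    have : (m:ℝ) ≤ n := Nat.cast_le.2 hmn
    linarith
  have hunion : (⋃ n, Ioc (e n) T) = Ioc 0 T := by
    ext y
    simp only [mem_iUnion, mem_Ioc]
    constructor
    · rintro ⟨n, h1, h2⟩
      exact ⟨lt_trans (he_mem n).1 h1, h2⟩
    · rintro ⟨h1, h2⟩
      obtain ⟨n, hn⟩ := exists_nat_gt (T / y)
      refine ⟨n, ?_, h2⟩
      rw [div_lt_iff₀ (by positivity)]
      rw [div_lt_iff₀ h1] at hn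
      nlinarith
  have htend1 : Tendsto (fun n => ∫ y in Ioc (e n) T, g y) atTop (𝓝 (∫ y in Ioc 0 T, g y)) := by
    have := tendsto_setIntegral_of_monotone (fun n => measurableSet_Ioc) hmono
      (hunion ▸ hgint)
    rwa [hunion] at this
  have heq : ∀ n, ∫ y in Ioc (e n) T, g y = Gaux a b T - Gaux a b (e n) := by
    intro n
    rw [← intervalIntegral.integral_of_le (he_mem n).2.le]
    exact hsub (e n) (he_mem n)
  have he_tend : Tendsto e atTop (𝓝[>] (0:ℝ)) := by
    apply tendsto_nhdsWithin_of_tendsto_nhds_of_eventually_within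
    · have h1 : Tendsto (fun n : ℕ => ((n:ℝ) + 2)) atTop atTop := by
        exact tendsto_natCast_atTop_atTop.atTop_add tendsto_const_nhds
      have h2 := h1.inv_tendsto_atTop.const_mul T
      rw [mul_zero] at h2
      exact h2.congr fun n => by
        simp only [Pi.inv_apply, he]
        ring
    · exact Eventually.of_forall fun n => (he_mem n).1
  have htend2 : Tendsto (fun n => Gaux a b T - Gaux a b (e n)) atTop (𝓝 (Gaux a b T)) := by
    have h := ((Gaux_tendsto_zero ha hb).comp he_tend).const_sub (Gaux a b T)
    rw [sub_zero] at h
    exact h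
  have : ∫ y in Ioc 0 T, g y = Gaux a b T := by
    apply tendsto_nhds_unique ?_ htend2
    simp_rw [← heq]
    exact htend1
  rw [← integral_Ioc_eq_integral_Ioo]
  exact this

end key

section main

/-- inner function -/
noncomputable def Ff (α t y : ℝ) : ℝ := qf ((t - y) / (α * Real.sqrt y))

lemma Ff_contOn {α : ℝ} (hα : 0 < α) (t : ℝ) : ContinuousOn (Ff α t) (Ioi 0) := by
  apply qf_cont.comp_continuousOn
  apply ContinuousOn.div (by fun_prop)
  · exact continuous_const.continuousOn.mul Real.continuous_sqrt.continuousOn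
  · intro y hy
    have h2 : 0 < Real.sqrt y := Real.sqrt_pos.2 hy
    positivity

lemma Ff_int {α : ℝ} (hα : 0 < α) (t X : ℝ) : IntegrableOn (Ff α t) (Ioc 0 X) := by
  have hmeas : AEStronglyMeasurable (Ff α t) (volume.restrict (Ioc 0 X)) :=
    ((Ff_contOn hα t).mono Ioc_subset_Ioi_self).aestronglyMeasurable measurableSet_Ioc
  apply Integrable.mono (g := fun _ : ℝ => Real.sqrt (2 * π)) ?_ hmeas
  · apply Eventually.of_forall
    intro y
    simp only [Ff]
    rw [Real.norm_eq_abs, Real.norm_eq_abs, abs_of_nonneg (qf_nonneg _),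
      abs_of_nonneg (Real.sqrt_nonneg _)]
    exact qf_le _
  · exact integrableOn_const measure_Ioc_lt_top.ne

lemma Ff_int_Ioo {α : ℝ} (hα : 0 < α) (t X : ℝ) : IntegrableOn (Ff α t) (Ioo 0 X) :=
  (Ff_int hα t X).mono_set Ioo_subset_Ioc_self

/-- decomposition -/
lemma decomp {α : ℝ} (hα : 0 < α) {t₀ : ℝ} (ht₀ : 0 < t₀) {t : ℝ} (ht : 0 < t) :
    ∫ y in Ioo 0 t, Ff α t y =
      (∫ y in Ioo 0 t₀, Ff α t y) + ∫ y in t₀..t, Ff α t y := by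
  rw [← integral_Ioc_eq_integral_Ioo, ← integral_Ioc_eq_integral_Ioo]
  rcases le_total t₀ t with h | h
  · rw [intervalIntegral.integral_of_le h, ← Ioc_union_Ioc_eq_Ioc ht₀.le h,
      setIntegral_union (Ioc_disjoint_Ioc_of_le le_rfl) measurableSet_Ioc
        ((Ff_int hα t t₀)) ((Ff_int hα t t).mono_set (Ioc_subset_Ioc_left ht₀.le))]
  · rw [intervalIntegral.integral_of_ge h, ← Ioc_union_Ioc_eq_Ioc ht.le h,
      setIntegral_union (Ioc_disjoint_Ioc_of_le le_rfl) measurableSet_Ioc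
        ((Ff_int hα t t)) ((Ff_int hα t t₀).mono_set (Ioc_subset_Ioc_left ht.le))]
    ring

/-- derivative of fixed-domain part -/
lemma hasDerivAt_D1 {α : ℝ} (hα : 0 < α) {t₀ : ℝ} (ht₀ : 0 < t₀) :
    HasDerivAt (fun t => ∫ y in Ioo 0 t₀, Ff α t y)
      (∫ y in Ioo 0 t₀, -gf ((t₀ - y) / (α * Real.sqrt y)) * (α * Real.sqrt y)⁻¹) t₀ := by
  have key := hasDerivAt_integral_of_dominated_loc_of_deriv_le
    (μ := volume.restrict (Ioo 0 t₀)) (x₀ := t₀)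
    (F := fun t y => Ff α t y)
    (F' := fun t y => -gf ((t - y) / (α * Real.sqrt y)) * (α * Real.sqrt y)⁻¹)
    (bound := fun y => (α * Real.sqrt y)⁻¹)
    (Metric.ball_mem_nhds t₀ one_pos) ?_ ?_ ?_ ?_ ?_ ?_
  · exact key.2
  · apply Eventually.of_forall
    intro t
    exact ((Ff_contOn hα t).mono Ioo_subset_Ioi_self).aestronglyMeasurable measurableSet_Ioo
  · exact Ff_int_Ioo hα t₀ t₀
  · apply ContinuousOn.aestronglyMeasurable ?_ measurableSet_Ioo
    apply ContinuousOn.mul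
    · apply ContinuousOn.neg
      apply (by unfold gf; fun_prop : Continuous gf).comp_continuousOn
      apply ContinuousOn.div (by fun_prop)
        (continuous_const.continuousOn.mul Real.continuous_sqrt.continuousOn)
      intro y hy
      have h1 : 0 < y := hy.1
      have : 0 < Real.sqrt y := Real.sqrt_pos.2 h1
      exact mul_ne_zero hα.ne' this.ne'
    · apply ContinuousOn.inv₀ (continuous_const.continuousOn.mul Real.continuous_sqrt.continuousOn)
      intro y hy
      have h1 : 0 < y := hy.1
      have : 0 < Real.sqrt y := Real.sqrt_pos.2 h1
      exact mul_ne_zero hα.ne' this.ne'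
  · rw [ae_restrict_iff' measurableSet_Ioo]
    apply Eventually.of_forall
    intro y hy t _
    have h1 : 0 < y := hy.1
    have hs : 0 < Real.sqrt y := Real.sqrt_pos.2 h1
    have hαs : 0 < α * Real.sqrt y := by positivity
    rw [norm_mul, norm_neg, Real.norm_eq_abs, Real.norm_eq_abs,
      abs_of_nonneg (gf_nonneg _), abs_of_nonneg (inv_nonneg.2 hαs.le)]
    calc gf _ * (α * Real.sqrt y)⁻¹ ≤ 1 * (α * Real.sqrt y)⁻¹ :=
          mul_le_mul_of_nonneg_right (gf_le_one _) (inv_nonneg.2 hαs.le)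
      _ = (α * Real.sqrt y)⁻¹ := one_mul _
  · have h0 : IntegrableOn (fun y : ℝ => α⁻¹ * (Real.sqrt y)⁻¹) (Ioc 0 t₀) :=
      (sqrtinv_integrable t₀).const_mul α⁻¹
    have h1 : IntegrableOn (fun y : ℝ => α⁻¹ * (Real.sqrt y)⁻¹) (Ioo 0 t₀) :=
      h0.mono_set Ioo_subset_Ioc_self
    apply h1.congr_fun ?_ measurableSet_Ioo
    intro y _
    simp [mul_inv]
    ring
  · rw [ae_restrict_iff' measurableSet_Ioo]
    apply Eventually.of_forall
    intro y hy t _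
    have h1 : 0 < y := hy.1
    have hs : 0 < Real.sqrt y := Real.sqrt_pos.2 h1
    have hαs : (α * Real.sqrt y) ≠ 0 := by positivity
    have hinner : HasDerivAt (fun t => (t - y) / (α * Real.sqrt y)) ((α * Real.sqrt y)⁻¹) t := by
      have := ((hasDerivAt_id t).sub_const y).div_const (α * Real.sqrt y)
      simpa [one_div] using this
    have := (hasDerivAt_qf ((t - y) / (α * Real.sqrt y))).comp t hinner
    simpa [Ff, Function.comp_def] using this

lemma hasDerivAt_Psi {α : ℝ} (hα : 0 < α) {t₀ : ℝ} (ht₀ : 0 < t₀) :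
    HasDerivAt (fun t => ∫ y in t₀..t, Ff α t y) (qf 0) t₀ := by
  set Ψ : ℝ → ℝ := fun t => ∫ y in t₀..t, Ff α t y with hΨdef
  set Ψ₁ : ℝ → ℝ := fun t => ∫ y in t₀..t, Ff α t₀ y with hΨ₁def
  have hval : Ff α t₀ t₀ = qf 0 := by
    simp [Ff]
  have hΨ₁ : HasDerivAt Ψ₁ (qf 0) t₀ := by
    rw [← hval]
    apply intervalIntegral.integral_hasDerivAt_right
    · apply ((Ff_contOn hα t₀).mono ?_).intervalIntegrable
      rw [uIcc_self]
      exact singleton_subset_iff.2 ht₀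
    · exact ⟨Ioi 0, isOpen_Ioi.mem_nhds ht₀,
        ((Ff_contOn hα t₀).aestronglyMeasurable measurableSet_Ioi)⟩
    · exact (Ff_contOn hα t₀).continuousAt (isOpen_Ioi.mem_nhds ht₀)
  have hs2 : 0 < Real.sqrt (t₀ / 2) := Real.sqrt_pos.2 (by linarith)
  set C : ℝ := (α * Real.sqrt (t₀ / 2))⁻¹ with hC
  have hRbound : ∀ t ∈ Ioo (t₀ / 2) (3 * t₀ / 2), ‖Ψ t - Ψ₁ t‖ ≤ C * |t - t₀| * |t - t₀| := by
    intro t ht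
    have ht0 : 0 < t := by cases ht; linarith
    have hsub : uIcc t₀ t ⊆ Ioi 0 := by
      intro y hy
      rw [Set.mem_uIcc] at hy
      rcases hy with ⟨h1, _⟩ | ⟨h1, _⟩
      · exact lt_of_lt_of_le ht₀ h1
      · exact lt_of_lt_of_le ht0 h1
    have hint1 : IntervalIntegrable (Ff α t) volume t₀ t :=
      ((Ff_contOn hα t).mono hsub).intervalIntegrable
    have hint2 : IntervalIntegrable (Ff α t₀) volume t₀ t :=
      ((Ff_contOn hα t₀).mono hsub).intervalIntegrable
    have hdiff : Ψ t - Ψ₁ t = ∫ y in t₀..t, (Ff α t y - Ff α t₀ y) := by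
      rw [intervalIntegral.integral_sub hint1 hint2]
    rw [hdiff]
    have hbd : ∀ y ∈ Set.uIoc t₀ t, ‖Ff α t y - Ff α t₀ y‖ ≤ C * |t - t₀| := by
      intro y hy
      have hy0 : t₀ / 2 < y := by
        rcases hy.1 with h
        have : min t₀ t > t₀ / 2 := lt_min (by linarith) ht.1
        linarith [this.trans h]
      have hys : Real.sqrt (t₀ / 2) ≤ Real.sqrt y := Real.sqrt_le_sqrt (by linarith)
      have hy0' : 0 < y := by linarith
      have hsy : 0 < Real.sqrt y := Real.sqrt_pos.2 hy0'
      rw [Real.norm_eq_abs]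
      calc |Ff α t y - Ff α t₀ y|
          ≤ |(t - y) / (α * Real.sqrt y) - (t₀ - y) / (α * Real.sqrt y)| := qf_lip _ _
        _ = |t - t₀| * (α * Real.sqrt y)⁻¹ := by
            rw [div_sub_div_same, show t - y - (t₀ - y) = t - t₀ by ring, abs_div,
              abs_of_pos (by positivity : (0:ℝ) < α * Real.sqrt y)]
            ring
        _ ≤ |t - t₀| * C := by
            apply mul_le_mul_of_nonneg_left ?_ (abs_nonneg _)
            rw [hC]
            apply inv_anti₀ (by positivity)
            exact mul_le_mul_of_nonneg_left hys hα.le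
        _ = C * |t - t₀| := mul_comm _ _
    exact intervalIntegral.norm_integral_le_of_norm_le_const hbd
  have hlittle : (fun t => Ψ t - Ψ₁ t) =o[𝓝 t₀] (fun t => t - t₀) := by
    have hbig : (fun t => Ψ t - Ψ₁ t) =O[𝓝 t₀] (fun t => (t - t₀) * (t - t₀)) := by
      rw [Asymptotics.isBigO_iff]
      refine ⟨C, ?_⟩
      filter_upwards [Ioo_mem_nhds (by linarith : t₀ / 2 < t₀) (by linarith : t₀ < 3 * t₀ / 2)]
        with t ht
      simp only [Real.norm_eq_abs, abs_mul]
      calc |Ψ t - Ψ₁ t| ≤ C * |t - t₀| * |t - t₀| := by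
            simpa [Real.norm_eq_abs] using hRbound t ht
        _ = C * (|t - t₀| * |t - t₀|) := by ring
    have hlit : (fun t : ℝ => (t - t₀) * (t - t₀)) =o[𝓝 t₀] (fun t => t - t₀) := by
      rw [Asymptotics.isLittleO_iff]
      intro c hc
      filter_upwards [Metric.closedBall_mem_nhds t₀ hc] with t ht
      simp only [Real.norm_eq_abs, abs_mul]
      apply mul_le_mul_of_nonneg_right ?_ (abs_nonneg _)
      rw [Metric.mem_closedBall, Real.dist_eq] at ht
      exact ht
    exact hbig.trans_isLittleO hlit
  have h1 := hasDerivAt_iff_isLittleO.1 hΨ₁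
  rw [hasDerivAt_iff_isLittleO]
  have h2 := h1.add hlittle
  apply h2.congr' ?_ (EventuallyEq.refl _ _)
  apply Eventually.of_forall
  intro t
  have hΨt₀ : Ψ t₀ = 0 := by simp [hΨdef]
  have hΨ₁t₀ : Ψ₁ t₀ = 0 := by simp [hΨ₁def]
  simp only [hΨt₀, hΨ₁t₀, smul_eq_mul]
  ring

/-- For `α > 0`, the expected occupation time
`E t = √(2/π) ∫₀ᵗ (1/√y) ∫_{(t-y)/α}^∞ e^{-z²/(2y)} dz dy` is differentiable on `(0,∞)`
with `E′(t) = 2 exp(2t/α²) (1 - Φ(2√t/α))`. -/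
theorem stmt8 (α : ℝ) (hα : 0 < α) (E : ℝ → ℝ)
    (hE : ∀ t : ℝ, E t = Real.sqrt (2 / Real.pi)
      * ∫ y in Set.Ioo (0:ℝ) t,
          (1 / Real.sqrt y) * ∫ z in Set.Ioi ((t - y) / α), Real.exp (-z ^ 2 / (2 * y))) :
    ∀ t : ℝ, 0 < t →
      HasDerivAt E (2 * Real.exp (2 * t / α ^ 2) * (1 - gaussCDF (2 * Real.sqrt t / α))) t := by
  intro t ht
  -- rewrite E in terms of Ff
  have hEeq : E = fun s => Real.sqrt (2 / π) * ∫ y in Ioo (0:ℝ) s, Ff α s y := by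
    funext s
    rw [hE s]
    congr 1
    apply setIntegral_congr_fun measurableSet_Ioo
    intro y hy
    dsimp only
    rw [scaling hy.1, Ff, div_div]
  rw [hEeq]
  -- the derivative of the integral part
  have hD := (hasDerivAt_D1 hα ht).add (hasDerivAt_Psi hα ht)
  have hDeq : HasDerivAt (fun s => ∫ y in Ioo (0:ℝ) s, Ff α s y)
      ((∫ y in Ioo 0 t, -gf ((t - y) / (α * Real.sqrt y)) * (α * Real.sqrt y)⁻¹) + qf 0) t := by
    apply hD.congr_of_eventuallyEq
    apply Filter.eventuallyEq_of_mem (isOpen_Ioi.mem_nhds ht)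
    intro s hs
    exact decomp hα ht hs
  -- compute the integral term
  have ha' : 0 < t / α := div_pos ht hα
  have hb' : 0 < α⁻¹ := inv_pos.2 hα
  have hcalc : ∀ y ∈ Ioo (0:ℝ) t,
      -gf ((t - y) / (α * Real.sqrt y)) * (α * Real.sqrt y)⁻¹
        = -(Real.exp (t / α ^ 2)
            * (α⁻¹ / Real.sqrt y * Real.exp (-((t / α) ^ 2 / y + (α⁻¹) ^ 2 * y) / 2))) := by
    intro y hy
    have hy0 : 0 < y := hy.1
    have hs : 0 < Real.sqrt y := Real.sqrt_pos.2 hy0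
    have hsq : Real.sqrt y ^ 2 = y := Real.sq_sqrt hy0.le
    have h1 : ((t - y) / (α * Real.sqrt y)) ^ 2 = (t - y) ^ 2 / (α ^ 2 * y) := by
      rw [div_pow, mul_pow, hsq]
    have hexp : -((t - y) ^ 2 / (α ^ 2 * y)) / 2
        = t / α ^ 2 + -((t / α) ^ 2 / y + (α⁻¹) ^ 2 * y) / 2 := by
      field_simp
      ring
    unfold gf
    rw [h1, hexp, Real.exp_add, mul_inv]
    field_simp
  have hint_eq : (∫ y in Ioo 0 t, -gf ((t - y) / (α * Real.sqrt y)) * (α * Real.sqrt y)⁻¹)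
      = -(Real.exp (t / α ^ 2) * Gaux (t / α) α⁻¹ t) := by
    rw [setIntegral_congr_fun measurableSet_Ioo hcalc]
    rw [integral_neg, integral_const_mul]
    rw [key_integral ha' hb' ht]
  -- evaluate Gaux
  have hsqt : 0 < Real.sqrt t := Real.sqrt_pos.2 ht
  have hGval : Gaux (t / α) α⁻¹ t
      = Real.exp (-(t / α ^ 2)) * Nf 0 - Real.exp (t / α ^ 2) * Nf (-(2 * Real.sqrt t / α)) := by
    unfold Gaux
    have e1 : t / α * α⁻¹ = t / α ^ 2 := by
      rw [sq]
      field_simp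
    have e2 : α⁻¹ * Real.sqrt t - (t / α) / Real.sqrt t = 0 := by
      rw [div_div, mul_comm α (Real.sqrt t), ← div_div, Real.div_sqrt]
      field_simp
      simp
    have e3 : -(α⁻¹ * Real.sqrt t) - (t / α) / Real.sqrt t = -(2 * Real.sqrt t / α) := by
      rw [div_div, mul_comm α (Real.sqrt t), ← div_div, Real.div_sqrt]
      field_simp
      ring
    rw [e1, e2, e3]
  -- final algebra
  have hq0 : qf 0 = Nf 0 := by rw [qf_eq_Nf_neg, neg_zero]
  have hval : (∫ y in Ioo 0 t, -gf ((t - y) / (α * Real.sqrt y)) * (α * Real.sqrt y)⁻¹) + qf 0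
      = Real.exp (2 * t / α ^ 2) * Nf (-(2 * Real.sqrt t / α)) := by
    rw [hint_eq, hGval, hq0]
    rw [mul_sub, ← mul_assoc, ← mul_assoc, ← Real.exp_add, ← Real.exp_add]
    rw [show t / α ^ 2 + -(t / α ^ 2) = 0 by ring, show t / α ^ 2 + t / α ^ 2 = 2 * t / α ^ 2 by ring,
      Real.exp_zero]
    ring
  have hD2 : HasDerivAt (fun s => Real.sqrt (2 / π) * ∫ y in Ioo (0:ℝ) s, Ff α s y)
      (Real.sqrt (2 / π) * (Real.exp (2 * t / α ^ 2) * Nf (-(2 * Real.sqrt t / α)))) t := by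
    have := hDeq.const_mul (Real.sqrt (2 / π))
    rwa [hval] at this
  -- identify target
  have hsqrt2pi : (0:ℝ) < Real.sqrt (2 * π) := Real.sqrt_pos.2 (by positivity)
  have hgauss : 1 - gaussCDF (2 * Real.sqrt t / α)
      = (Real.sqrt (2 * π))⁻¹ * Nf (-(2 * Real.sqrt t / α)) := by
    have hcdf : gaussCDF (2 * Real.sqrt t / α) = (Real.sqrt (2 * π))⁻¹ * Nf (2 * Real.sqrt t / α) := rfl
    rw [hcdf, ← qf_eq_Nf_neg]
    have hq : qf (2 * Real.sqrt t / α) = Real.sqrt (2 * π) - Nf (2 * Real.sqrt t / α) := by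
      linarith [Nf_add_qf (2 * Real.sqrt t / α)]
    rw [hq, mul_sub, inv_mul_cancel₀ hsqrt2pi.ne']
  have hc0 : Real.sqrt (2 / π) = 2 * (Real.sqrt (2 * π))⁻¹ := by
    have h4 : (2:ℝ) / π = 4 / (2 * π) := by
      rw [div_eq_div_iff pi_pos.ne' (by positivity)]
      ring
    rw [h4, Real.sqrt_div (by norm_num : (0:ℝ) ≤ 4),
      show (4:ℝ) = 2 ^ 2 by norm_num, Real.sqrt_sq (by norm_num : (0:ℝ) ≤ 2)]
    rw [div_eq_mul_inv]
  rw [hgauss]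
  convert hD2 using 1
  rw [hc0]
  ring

end main
end

section
/- Let Y : [0,∞) → ℝ be a continuous function and let ρ : [0,∞) → [0,∞) be continuous, nondecreasing, and surjective, such that Y is constant on every interval on which ρ is constant. Define X(t) = Y(ρ⁻¹(t)) where ρ⁻¹(t) = inf{s : ρ(s) > t} is the right-continuous generalized inverse. Then X is right-continuous; if moreover ρ is strictly increasing, then ρ⁻¹ is continuous and X is continuous. -/
open Filter

/-- Let `Y` be continuous and `ρ : [0,∞) → [0,∞)` continuous,
nondecreasing, with `ρ 0 = 0` and `ρ(t) → ∞`, such that `Y` is constant on intervals of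
constancy of `ρ`. With `ρ⁻¹(t) = inf {s ≥ 0 | t < ρ s}` the right generalized inverse and
`X = Y ∘ ρ⁻¹`, `X` is right-continuous on `[0,∞)`; if moreover `ρ` is strictly increasing
on `[0,∞)`, then `ρ⁻¹` and `X` are continuous on `[0,∞)`. -/
theorem stmt16 (Y ρ : ℝ → ℝ) (hY : Continuous Y)
    (hρc : Continuous ρ) (hρm : Monotone ρ) (hρ0 : ρ 0 = 0)
    (hρtop : Tendsto ρ atTop atTop)
    (hsync : ∀ a b : ℝ, 0 ≤ a → a ≤ b → ρ a = ρ b → Y a = Y b)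
    (ρinv : ℝ → ℝ) (hρinv : ∀ t : ℝ, ρinv t = sInf {s : ℝ | 0 ≤ s ∧ t < ρ s}) :
    (∀ t : ℝ, 0 ≤ t → ContinuousWithinAt (fun u => Y (ρinv u)) (Set.Ici t) t) ∧
    (StrictMonoOn ρ (Set.Ici 0) →
      ContinuousOn ρinv (Set.Ici 0) ∧ ContinuousOn (fun u => Y (ρinv u)) (Set.Ici 0)) := by
  have hne : ∀ t : ℝ, {s : ℝ | 0 ≤ s ∧ t < ρ s}.Nonempty := by
    intro t
    obtain ⟨s, hs1, hs2⟩ := ((eventually_ge_atTop (0:ℝ)).and (hρtop.eventually_gt_atTop t)).exists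
    exact ⟨s, hs1, hs2⟩
  have hbdd : ∀ t : ℝ, BddBelow {s : ℝ | 0 ≤ s ∧ t < ρ s} := fun t => ⟨0, fun s hs => hs.1⟩
  have hnonneg : ∀ t : ℝ, 0 ≤ ρinv t := by
    intro t; rw [hρinv]; exact le_csInf (hne t) fun s hs => hs.1
  have hmono : Monotone ρinv := by
    intro a b hab
    rw [hρinv, hρinv]
    exact csInf_le_csInf (hbdd a) (hne b) fun s hs => ⟨hs.1, lt_of_le_of_lt hab hs.2⟩
  have hgt : ∀ t s : ℝ, ρinv t < s → t < ρ s := by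
    intro t s hs
    rw [hρinv] at hs
    obtain ⟨x, hx, hxs⟩ := exists_lt_of_csInf_lt (hne t) hs
    exact lt_of_lt_of_le hx.2 (hρm hxs.le)
  have hmem_le : ∀ t s : ℝ, 0 ≤ s → t < ρ s → ρinv t ≤ s := by
    intro t s h1 h2; rw [hρinv]; exact csInf_le (hbdd t) ⟨h1, h2⟩
  have hle : ∀ t : ℝ, 0 ≤ t → ρ (ρinv t) ≤ t := by
    intro t ht
    rcases eq_or_lt_of_le (hnonneg t) with h | h
    · rw [← h, hρ0]; exact ht
    · have htd : Tendsto ρ (nhdsWithin (ρinv t) (Set.Iio (ρinv t))) (nhds (ρ (ρinv t))) :=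
        (hρc.tendsto _).mono_left nhdsWithin_le_nhds
      apply le_of_tendsto htd
      filter_upwards [Ioo_mem_nhdsLT_of_mem (Set.mem_Ioc.mpr ⟨h, le_rfl⟩)] with s hs
      by_contra hc
      push_neg at hc
      have hmem : s ∈ {s : ℝ | 0 ≤ s ∧ t < ρ s} := ⟨hs.1.le, hc⟩
      have h2 : ρinv t ≤ s := by rw [hρinv]; exact csInf_le (hbdd t) hmem
      exact absurd hs.2 (not_lt.mpr h2)
  have hright : ∀ t : ℝ, 0 ≤ t → ∀ ε : ℝ, 0 < ε →
      ∃ δ > 0, ∀ u, t ≤ u → u < t + δ → ρinv u < ρinv t + ε := by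
    intro t ht ε hε
    have hs : t < ρ (ρinv t + ε / 2) := hgt t _ (by linarith)
    refine ⟨ρ (ρinv t + ε / 2) - t, by linarith, fun u hu hu2 => ?_⟩
    have h1 : ρinv u ≤ ρinv t + ε / 2 :=
      hmem_le u _ (by have := hnonneg t; linarith) (by linarith)
    linarith
  have hleft : StrictMonoOn ρ (Set.Ici 0) → ∀ t : ℝ, 0 ≤ t → ∀ ε : ℝ, 0 < ε →
      ∃ δ > 0, ∀ u, 0 ≤ u → t - δ < u → ρinv t - ε < ρinv u := by
    intro hst t ht ε hε
    rcases eq_or_lt_of_le (hnonneg t) with h | h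
    · exact ⟨1, one_pos, fun u hu _ => by have := hnonneg u; linarith⟩
    · set a := max 0 (ρinv t - ε / 2) with ha
      have ha0 : 0 ≤ a := le_max_left _ _
      have halt : a < ρinv t := max_lt h (by linarith)
      have hρa : ρ a < ρ (ρinv t) := hst (Set.mem_Ici.mpr ha0) (Set.mem_Ici.mpr (hnonneg t)) halt
      have hρat : ρ a < t := lt_of_lt_of_le hρa (hle t ht)
      refine ⟨t - ρ a, by linarith, fun u hu hu2 => ?_⟩
      have h1 : a ≤ ρinv u := by
        rw [hρinv]
        refine le_csInf (hne u) fun s hs => ?_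
        by_contra hc
        push_neg at hc
        have hle' : ρ s ≤ ρ a := hρm hc.le
        linarith [hs.2]
      have h2 : ρinv t - ε / 2 ≤ a := le_max_right _ _
      linarith
  have hcont_inv_right : ∀ t : ℝ, 0 ≤ t → ContinuousWithinAt ρinv (Set.Ici t) t := by
    intro t ht
    rw [Metric.continuousWithinAt_iff]
    intro ε hε
    obtain ⟨δ, hδ, hδ2⟩ := hright t ht ε hε
    refine ⟨δ, hδ, fun x hx hxd => ?_⟩
    rw [Real.dist_eq] at hxd ⊢
    have hx1 : t ≤ x := hx
    have hx2 : x < t + δ := by rw [abs_lt] at hxd; linarith [hxd.2]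
    have h1 := hmono hx1
    have h2 := hδ2 x hx1 hx2
    rw [abs_lt]; constructor <;> linarith
  constructor
  · intro t ht
    exact hY.continuousAt.comp_continuousWithinAt (hcont_inv_right t ht)
  · intro hst
    have hcinv : ContinuousOn ρinv (Set.Ici 0) := by
      intro t ht
      rw [Metric.continuousWithinAt_iff]
      intro ε hε
      obtain ⟨δ1, hδ1, hδ1'⟩ := hright t ht ε hε
      obtain ⟨δ2, hδ2, hδ2'⟩ := hleft hst t ht ε hε
      refine ⟨min δ1 δ2, lt_min hδ1 hδ2, fun x hx hxd => ?_⟩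
      rw [Real.dist_eq, abs_lt] at hxd
      rw [Real.dist_eq, abs_lt]
      have hx0 : (0:ℝ) ≤ x := hx
      rcases le_total t x with hc | hc
      · have h2 := hδ1' x hc (by have := min_le_left δ1 δ2; linarith [hxd.2])
        have h1 := hmono hc
        constructor <;> linarith
      · have h2 := hδ2' x hx0 (by have := min_le_right δ1 δ2; linarith [hxd.1])
        have h1 := hmono hc
        constructor <;> linarith
    exact ⟨hcinv, hY.comp_continuousOn hcinv⟩
end
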